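/- If X is a compact Hausdorff space and C(X) (continuous complex-valued functions) is generated as a unital C*-algebra by n positive elements b_1,...,b_n satisfying 0 ≤ b_1 + ... + b_n ≤ 1, then X is homeomorphic to a closed subset of the standard n-simplex Δⁿ ⊂ ℝ^{n+1}. -/

import Mathlib

instance (priority := 100) ContinuousMap.instContinuousStar' {α β : Type*} [TopologicalSpace α]
    [TopologicalSpace β] [Star β] [ContinuousStar β] : ContinuousStar C(α, β) :=
  ⟨ContinuousMap.continuous_postcomp starContinuousMap⟩

/-- The complexification of a real-valued continuous function. -/
noncomputable def ofRealCM {X : Type*} [TopologicalSpace X] (f : C(X, ℝ)) : C(X, ℂ) :=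
  (⟨Complex.ofReal, Complex.continuous_ofReal⟩ : C(ℝ, ℂ)).comp f

/-- If `C(X)` is generated as a unital C*-algebra by `n` positive elements `b₁, …, bₙ`
with `0 ≤ b₁ + ⋯ + bₙ ≤ 1`, then `X` is homeomorphic to a closed subset of the
standard `n`-simplex `Δⁿ ⊆ ℝ^{n+1}`. -/
theorem closedEmbedding_into_simplex_of_generators
    (X : Type) [TopologicalSpace X] [CompactSpace X] [T2Space X] (n : ℕ)
    (b : Fin n → C(X, ℝ)) (hpos : ∀ i, 0 ≤ b i) (hsum : ∑ i, b i ≤ 1)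
    (hgen : (StarAlgebra.adjoin ℂ (Set.range fun i => ofRealCM (b i))).topologicalClosure
      = (⊤ : StarSubalgebra ℂ C(X, ℂ))) :
    ∃ e : X → stdSimplex ℝ (Fin (n + 1)), Topology.IsClosedEmbedding e := by
  have hb : ∀ (x : X) (i : Fin n), 0 ≤ b i x := fun x i => hpos i x
  have hsx : ∀ x : X, ∑ i, b i x ≤ 1 := by
    intro x
    have := hsum x
    simpa using this
  set e : X → stdSimplex ℝ (Fin (n + 1)) := fun x =>
    ⟨Fin.snoc (fun i => b i x) (1 - ∑ i, b i x), by
      constructor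
      · intro i
        refine Fin.lastCases ?_ ?_ i
        · simpa using sub_nonneg.2 (hsx x)
        · intro j; simpa using hb x j
      · rw [Fin.sum_univ_castSucc]
        simp⟩ with he
  refine ⟨e, ?_⟩
  have hcont : Continuous e := by
    refine Continuous.subtype_mk ?_ _
    refine continuous_pi fun i => ?_
    refine Fin.lastCases ?_ ?_ i
    · convert (continuous_const.sub
        (continuous_finset_sum Finset.univ fun i _ => (b i).continuous) :
          Continuous fun x : X => (1 : ℝ) - ∑ i, b i x) using 1
      funext x; simp
    · intro j
      simpa using (b j).continuous
  have hinj : Function.Injective e := by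
    intro x y hxy
    have hbxy : ∀ i, b i x = b i y := by
      intro i
      have := congrFun (congrArg Subtype.val hxy) i.castSucc
      simpa [he, Fin.snoc_castSucc] using this
    -- all elements of C(X, ℂ) agree at x and y
    have key : ∀ f : C(X, ℂ), f x = f y := by
      intro f
      let φ : C(X, ℂ) →⋆ₐ[ℂ] ℂ := ContinuousMap.evalStarAlgHom ℂ ℂ x
      let ψ : C(X, ℂ) →⋆ₐ[ℂ] ℂ := ContinuousMap.evalStarAlgHom ℂ ℂ y
      have hEq : (StarAlgHom.equalizer φ ψ : StarSubalgebra ℂ C(X, ℂ)) =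
          StarAlgHom.equalizer φ ψ := rfl
      have hclosed : IsClosed ((StarAlgHom.equalizer φ ψ : StarSubalgebra ℂ C(X, ℂ)) : Set C(X, ℂ)) := by
        have : ((StarAlgHom.equalizer φ ψ : StarSubalgebra ℂ C(X, ℂ)) : Set C(X, ℂ)) =
            {g : C(X, ℂ) | g x = g y} := rfl
        rw [this]
        exact isClosed_eq (continuous_eval_const x)
          (continuous_eval_const y)
      have hle : StarAlgebra.adjoin ℂ (Set.range fun i => ofRealCM (b i)) ≤
          StarAlgHom.equalizer φ ψ := by
        refine StarAlgHom.adjoin_le_equalizer φ ψ ?_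
        rintro g ⟨i, rfl⟩
        show (ofRealCM (b i)) x = (ofRealCM (b i)) y
        simp [ofRealCM, hbxy i]
      have hle' := StarSubalgebra.topologicalClosure_minimal hle hclosed
      rw [hgen] at hle'
      exact hle' (by trivial)
    by_contra hne
    obtain ⟨g, hg0, hg1, -⟩ := exists_continuous_zero_one_of_isClosed
      (isClosed_singleton (x := x)) (isClosed_singleton (x := y))
      (Set.disjoint_singleton.2 hne)
    have := key (ofRealCM g)
    simp only [ofRealCM, ContinuousMap.comp_apply, ContinuousMap.coe_mk] at this
    rw [hg0 rfl, hg1 rfl] at this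
    exact zero_ne_one (by exact_mod_cast this)
  exact hcont.isClosedEmbedding hinj
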